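/- (Proposition on orbifold Euler numbers.) Let n ≥ 0 and r ≥ 0 be integers and let m_1,…,m_r be positive integers. Set s_i := 1 − 1/m_i ∈ ℚ. Then the following identity holds in ℚ: Σ_{k=0}^{n} (−1)^{n−k} · binom(r − 2 − k, n − k) · Σ_{B ⊆ {1,…,r}, |B| = k} ∏_{i∈B} (1/m_i) = Σ_{j=0}^{n} (−1)^j · (n + 1 − j) · Σ_{B ⊆ {1,…,r}, |B| = j} ∏_{i∈B} s_i, where binom(m, ℓ) for m ∈ ℤ, ℓ ∈ ℕ denotes the generalized binomial coefficient m(m−1)⋯(m−ℓ+1)/ℓ!. (Both sides equal the orbifold Euler number of an orbifold on ℙ^n whose locus is an arrangement of r hyperplanes in general position with multiplicities m_1,…,m_r.) -/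

import Mathlib

open Finset

lemma count_supersets {ι : Type*} [DecidableEq ι] (s A : Finset ι) (hA : A ⊆ s)
    {j : ℕ} (hkj : A.card ≤ j) :
    ((s.powersetCard j).filter (fun B => A ⊆ B)).card
      = Nat.choose (s.card - A.card) (j - A.card) := by
  rw [← Finset.card_sdiff_of_subset hA, ← Finset.card_powersetCard (j - A.card) (s \ A)]
  apply Finset.card_bij' (fun B _ => B \ A) (fun C _ => C ∪ A)
  · intro B hB
    simp only [mem_filter, mem_powersetCard] at hB
    obtain ⟨⟨hBs, hBc⟩, hAB⟩ := hB
    simp only [mem_powersetCard]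
    exact ⟨sdiff_subset_sdiff hBs (le_refl A), by rw [card_sdiff_of_subset hAB, hBc]⟩
  · intro C hC
    simp only [mem_powersetCard] at hC
    obtain ⟨hCs, hCc⟩ := hC
    have hdisj : Disjoint C A := disjoint_of_subset_left hCs sdiff_disjoint
    simp only [mem_filter, mem_powersetCard]
    refine ⟨⟨union_subset (hCs.trans sdiff_subset) hA, ?_⟩, subset_union_right⟩
    rw [card_union_of_disjoint hdisj, hCc]
    omega
  · intro B hB
    simp only [mem_filter, mem_powersetCard] at hB
    exact sdiff_union_of_subset hB.2
  · intro C hC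
    simp only [mem_powersetCard] at hC
    have hdisj : Disjoint C A := disjoint_of_subset_left hC.1 sdiff_disjoint
    rw [union_sdiff_cancel_right hdisj]

lemma count_supersets_zero {ι : Type*} [DecidableEq ι] (s A : Finset ι)
    {j : ℕ} (hkj : j < A.card) :
    ((s.powersetCard j).filter (fun B => A ⊆ B)) = ∅ := by
  apply filter_eq_empty_iff.mpr
  intro B hB h
  simp only [mem_powersetCard] at hB
  have := card_le_card h
  omega

lemma prod_one_sub' {ι : Type*} [DecidableEq ι] (x : ι → ℚ) (B : Finset ι) :
    ∏ i ∈ B, (1 - x i) = ∑ A ∈ B.powerset, (-1:ℚ)^A.card * ∏ i ∈ A, x i := by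
  have h := Finset.prod_add (fun i => -x i) (fun _ => (1:ℚ)) B
  simp only [prod_const_one, mul_one] at h
  calc ∏ i ∈ B, (1 - x i) = ∏ i ∈ B, (-x i + 1) := by
        refine prod_congr rfl fun i _ => by ring
    _ = ∑ A ∈ B.powerset, ∏ i ∈ A, (-x i) := h
    _ = ∑ A ∈ B.powerset, (-1:ℚ)^A.card * ∏ i ∈ A, x i := by
        refine sum_congr rfl fun A _ => ?_
        rw [← prod_const (-1:ℚ), ← prod_mul_distrib]
        exact prod_congr rfl fun i _ => by ring


lemma lemE {ι : Type*} [DecidableEq ι] (s : Finset ι) (x : ι → ℚ) (j : ℕ) :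
    ∑ B ∈ s.powersetCard j, ∏ i ∈ B, (1 - x i)
      = ∑ k ∈ range (j+1), (-1:ℚ)^k * (Nat.choose (s.card - k) (j-k)) *
          ∑ A ∈ s.powersetCard k, ∏ i ∈ A, x i := by
  classical
  have step1 : ∑ B ∈ s.powersetCard j, ∏ i ∈ B, (1 - x i)
      = ∑ B ∈ s.powersetCard j, ∑ A ∈ B.powerset, (-1:ℚ)^A.card * ∏ i ∈ A, x i :=
    sum_congr rfl fun B _ => prod_one_sub' x B
  have step2 : ∑ B ∈ s.powersetCard j, ∑ A ∈ B.powerset, (-1:ℚ)^A.card * ∏ i ∈ A, x i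
      = ∑ A ∈ s.powerset, ∑ B ∈ (s.powersetCard j).filter (fun B => A ⊆ B),
          (-1:ℚ)^A.card * ∏ i ∈ A, x i := by
    apply sum_comm'
    intro B A
    simp only [mem_powersetCard, mem_powerset, mem_filter]
    constructor
    · rintro ⟨⟨hBs, hBc⟩, hAB⟩
      exact ⟨⟨⟨hBs, hBc⟩, hAB⟩, hAB.trans hBs⟩
    · rintro ⟨⟨⟨hBs, hBc⟩, hAB⟩, _⟩
      exact ⟨⟨hBs, hBc⟩, hAB⟩
  have step3 : ∀ A ∈ s.powerset,
      ∑ B ∈ (s.powersetCard j).filter (fun B => A ⊆ B),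
          (-1:ℚ)^A.card * ∏ i ∈ A, x i
      = (if A.card ≤ j then (Nat.choose (s.card - A.card) (j - A.card) : ℚ) else 0) *
          ((-1:ℚ)^A.card * ∏ i ∈ A, x i) := by
    intro A hA
    rw [sum_const, nsmul_eq_mul]
    by_cases h : A.card ≤ j
    · rw [if_pos h, count_supersets s A (mem_powerset.mp hA) h]
    · rw [if_neg h, count_supersets_zero s A (by omega), card_empty]
      simp
  rw [step1, step2, sum_congr rfl step3]
  rw [sum_powerset]
  have hL : ∀ k ∈ range (s.card + 1),
      ∑ A ∈ s.powersetCard k, (if A.card ≤ j then (Nat.choose (s.card - A.card) (j - A.card) : ℚ) else 0) *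
          ((-1:ℚ)^A.card * ∏ i ∈ A, x i)
      = (if k ≤ j then (Nat.choose (s.card - k) (j - k) : ℚ) else 0) *
          ((-1:ℚ)^k * ∑ A ∈ s.powersetCard k, ∏ i ∈ A, x i) := by
    intro k _
    simp only [mul_sum]
    refine sum_congr rfl fun A hA => ?_
    rw [(mem_powersetCard.mp hA).2]
  rw [sum_congr rfl hL]
  have key : ∀ M, s.card ≤ M → j ≤ M →
      ∑ k ∈ range (M + 1), (if k ≤ j then (Nat.choose (s.card - k) (j - k) : ℚ) else 0) *
          ((-1:ℚ)^k * ∑ A ∈ s.powersetCard k, ∏ i ∈ A, x i)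
        = ∑ k ∈ range (j+1), (-1:ℚ)^k * (Nat.choose (s.card - k) (j-k)) *
            ∑ A ∈ s.powersetCard k, ∏ i ∈ A, x i := by
    intro M hsM hjM
    rw [← sum_subset (range_subset_range.mpr (by omega : j + 1 ≤ M + 1))]
    · refine sum_congr rfl fun k hk => ?_
      simp only [mem_range] at hk
      rw [if_pos (by omega)]
      ring
    · intro k hk hk'
      simp only [mem_range] at hk hk'
      rw [if_neg (by omega)]
      simp
  rw [show (∑ k ∈ range (s.card + 1), (if k ≤ j then (Nat.choose (s.card - k) (j - k) : ℚ) else 0) *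
          ((-1:ℚ)^k * ∑ A ∈ s.powersetCard k, ∏ i ∈ A, x i))
      = ∑ k ∈ range (max s.card j + 1), (if k ≤ j then (Nat.choose (s.card - k) (j - k) : ℚ) else 0) *
          ((-1:ℚ)^k * ∑ A ∈ s.powersetCard k, ∏ i ∈ A, x i) by
    apply sum_subset (range_subset_range.mpr (by omega))
    intro k hk hk'
    simp only [mem_range] at hk hk'
    rw [powersetCard_eq_empty.mpr (by omega : s.card < k)]
    simp]
  exact key _ (le_max_left _ _) (le_max_right _ _)

lemma S1q (N : ℕ) (M : ℚ) :
    ∑ t ∈ range (N+1), (-1:ℚ)^t * Ring.choose M t = (-1)^N * Ring.choose (M-1) N := by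
  induction N with
  | zero => simp
  | succ N ih =>
    rw [sum_range_succ, ih]
    have h : Ring.choose M (N+1) = Ring.choose (M-1) N + Ring.choose (M-1) (N+1) := by
      have := Ring.choose_succ_succ (M-1) N
      rwa [sub_add_cancel] at this
    rw [h]; ring

lemma S2q (N : ℕ) (M : ℚ) :
    ∑ t ∈ range (N+1), (-1:ℚ)^t * ((N:ℚ)+1-t) * Ring.choose M t
      = (-1)^N * Ring.choose (M-2) N := by
  induction N with
  | zero => simp
  | succ N ih =>
    have split : ∀ t ∈ range (N+1+1), (-1:ℚ)^t * ((N+1:ℕ)+1-(t:ℚ)) * Ring.choose M t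
        = (-1:ℚ)^t * ((N:ℚ)+1-t) * Ring.choose M t + (-1:ℚ)^t * Ring.choose M t := by
      intro t _; push_cast; ring
    rw [sum_congr rfl split, sum_add_distrib, sum_range_succ _ (N+1), ih, S1q (N+1) M]
    have h : Ring.choose (M-1) (N+1) = Ring.choose (M-2) N + Ring.choose (M-2) (N+1) := by
      have := Ring.choose_succ_succ (M-2) N
      rwa [show M - 2 + 1 = M - 1 by ring] at this
    rw [h]
    push_cast
    ring

theorem orbifold_euler_number_formula
    (n r : ℕ) (m : Fin r → ℕ) (hm : ∀ i, 0 < m i) :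
    ∑ k ∈ Finset.range (n + 1),
        (-1 : ℚ) ^ (n - k) * (Ring.choose ((r : ℤ) - 2 - k) (n - k) : ℚ) *
          ∑ B ∈ Finset.powersetCard k (Finset.univ : Finset (Fin r)),
            ∏ i ∈ B, (1 / (m i : ℚ)) =
      ∑ j ∈ Finset.range (n + 1),
        (-1 : ℚ) ^ j * ((n : ℚ) + 1 - j) *
          ∑ B ∈ Finset.powersetCard j (Finset.univ : Finset (Fin r)),
            ∏ i ∈ B, (1 - 1 / (m i : ℚ)) := by
  classical
  have hR : ∀ j ∈ range (n+1),
      (-1 : ℚ) ^ j * ((n : ℚ) + 1 - j) *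
          ∑ B ∈ Finset.powersetCard j (Finset.univ : Finset (Fin r)),
            ∏ i ∈ B, (1 - 1 / (m i : ℚ))
      = ∑ k ∈ range (j+1), (-1 : ℚ) ^ j * ((n : ℚ) + 1 - j) *
          ((-1:ℚ)^k * (Nat.choose (r-k) (j-k)) *
            ∑ B ∈ Finset.powersetCard k (Finset.univ : Finset (Fin r)),
              ∏ i ∈ B, (1 / (m i : ℚ))) := by
    intro j _
    rw [lemE Finset.univ (fun i => 1 / (m i : ℚ)) j, mul_sum]
    refine sum_congr rfl fun k _ => ?_
    rw [card_univ, Fintype.card_fin]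
  rw [sum_congr rfl hR]
  rw [sum_comm' (t' := range (n+1)) (s' := fun k => Ico k (n+1)) (by
    intro j k
    simp only [mem_range, mem_Ico]
    omega)]
  refine sum_congr rfl fun k hk => ?_
  simp only [mem_range] at hk
  have hkn : k ≤ n := by omega
  by_cases hkr : k ≤ r
  · -- main case
    have hek : ∀ j ∈ Ico k (n+1),
        (-1 : ℚ) ^ j * ((n : ℚ) + 1 - j) *
          ((-1:ℚ)^k * (Nat.choose (r-k) (j-k)) *
            ∑ B ∈ Finset.powersetCard k (Finset.univ : Finset (Fin r)),
              ∏ i ∈ B, (1 / (m i : ℚ)))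
        = (∑ B ∈ Finset.powersetCard k (Finset.univ : Finset (Fin r)),
              ∏ i ∈ B, (1 / (m i : ℚ))) *
            ((-1:ℚ)^j * ((-1:ℚ)^k) * (((n : ℚ) + 1 - j) * (Nat.choose (r-k) (j-k)))) := by
      intro j _; ring
    rw [sum_congr rfl hek, ← mul_sum, sum_Ico_eq_sum_range,
      show n + 1 - k = (n - k) + 1 by omega]
    have hS := S2q (n-k) (((r-k : ℕ)) : ℚ)
    rw [show ((r - k : ℕ) : ℚ) - 2 = (((r:ℤ) - 2 - (k:ℤ) : ℤ) : ℚ) by push_cast [hkr]; ring] at hS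
    have hsum : (∑ t ∈ range (n - k + 1),
        (-1:ℚ)^(k+t) * ((-1:ℚ)^k) * (((n : ℚ) + 1 - ((k+t : ℕ) : ℚ)) * (Nat.choose (r-k) ((k+t)-k))))
        = (-1:ℚ)^(n-k) * Ring.choose ((((r:ℤ) - 2 - (k:ℤ) : ℤ)) : ℚ) (n-k) := by
      rw [← hS]
      refine sum_congr rfl fun t ht => ?_
      simp only [mem_range] at ht
      have h2 : (-1:ℚ)^(k+t) * (-1:ℚ)^k = (-1:ℚ)^t := by
        rw [← pow_add, show k+t+k = t+2*k by omega, pow_add, pow_mul]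
        simp
      rw [show (k+t)-k = t by omega, Ring.choose_natCast]
      push_cast [hkr, hkn]
      linear_combination (((n:ℚ) + 1 - k - t) * (Nat.choose (r-k) t)) * h2
    rw [hsum]
    push_cast
    ring
  · -- degenerate case
    have hcard : (Finset.univ : Finset (Fin r)).card < k := by
      rw [card_univ, Fintype.card_fin]; omega
    rw [powersetCard_eq_empty.mpr hcard]
    simp
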